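/- Let {A^x_a} be a submeasurement and {B^x_a} a measurement with E_x Σ_{a≠b} τ(A^x_a B^x_b) ≤ γ. Then E_x Σ_a ‖A^x_a − A^x_a B^x_a‖_τ² ≤ γ and E_x Σ_a ‖A^x_a B^x_a − A^x B^x_a‖_τ² ≤ γ, where A^x = Σ_a A^x_a. -/

import Mathlib

open scoped Matrix ComplexOrder BigOperators

/-- The normalized trace (the unique tracial state on n×n complex matrices). -/
noncomputable def tau {n : ℕ} (A : Matrix (Fin n) (Fin n) ℂ) : ℂ := A.trace / (n : ℂ)

/-- The squared τ-norm, `‖A‖_τ² = τ(A*A)` (a real number). -/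
noncomputable def tauNormSq {n : ℕ} (A : Matrix (Fin n) (Fin n) ℂ) : ℝ := (tau (Aᴴ * A)).re

/-- A submeasurement: a family of positive semidefinite operators with sum at most the identity. -/
def IsSubmeasurement {n : ℕ} {α : Type*} [Fintype α]
    (M : α → Matrix (Fin n) (Fin n) ℂ) : Prop :=
  (∀ a, (M a).PosSemidef) ∧ (1 - ∑ a, M a).PosSemidef

/-- A measurement: a family of positive semidefinite operators summing to the identity. -/
def IsMeasurement {n : ℕ} {α : Type*} [Fintype α]
    (M : α → Matrix (Fin n) (Fin n) ℂ) : Prop :=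
  (∀ a, (M a).PosSemidef) ∧ (∑ a, M a) = 1

/-- A projective submeasurement: a family of orthogonal projections with sum at most the identity. -/
def IsProjectiveSubmeasurement {n : ℕ} {α : Type*} [Fintype α]
    (M : α → Matrix (Fin n) (Fin n) ℂ) : Prop :=
  (∀ a, (M a).IsHermitian ∧ M a * M a = M a) ∧ (1 - ∑ a, M a).PosSemidef


open Matrix

lemma psd_trace_nonneg {n : ℕ} {M : Matrix (Fin n) (Fin n) ℂ} (hM : M.PosSemidef) :
    0 ≤ M.trace :=
  Finset.sum_nonneg fun i _ => by
    simpa using hM.diag_nonneg (i := i)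

open scoped MatrixOrder in
lemma psd_trace_mul_nonneg {n : ℕ} {P Q : Matrix (Fin n) (Fin n) ℂ}
    (hP : P.PosSemidef) (hQ : Q.PosSemidef) : 0 ≤ (P * Q).trace := by
  have hs : CFC.sqrt P * CFC.sqrt P = P := CFC.sqrt_mul_sqrt_self P hP.nonneg
  have hpsd : ((CFC.sqrt P)ᴴ * Q * CFC.sqrt P).PosSemidef :=
    hQ.conjTranspose_mul_mul_same (CFC.sqrt P)
  have := psd_trace_nonneg hpsd
  rwa [Matrix.trace_mul_cycle, (CFC.sqrt_nonneg P).posSemidef.isHermitian.eq, hs] at this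

lemma psd_trace_mul_mono {n : ℕ} {P X Y : Matrix (Fin n) (Fin n) ℂ}
    (hP : P.PosSemidef) (h : (Y - X).PosSemidef) : (P * X).trace ≤ (P * Y).trace := by
  have := psd_trace_mul_nonneg hP h
  rw [mul_sub, Matrix.trace_sub] at this
  exact sub_nonneg.mp this

open scoped MatrixOrder in
lemma psd_sub_sq {n : ℕ} {M : Matrix (Fin n) (Fin n) ℂ}
    (hM : M.PosSemidef) (h1 : (1 - M).PosSemidef) : (M - M * M).PosSemidef := by
  obtain ⟨s, hsH, hs⟩ : ∃ s : Matrix (Fin n) (Fin n) ℂ, sᴴ = s ∧ s * s = M :=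
    ⟨CFC.sqrt M, (CFC.sqrt_nonneg M).posSemidef.isHermitian.eq,
      CFC.sqrt_mul_sqrt_self M hM.nonneg⟩
  have h := h1.conjTranspose_mul_mul_same s
  rw [hsH] at h
  have e1 : s * (1 - M) * s = s * s - s * s * (s * s) := by
    rw [← hs]; noncomm_ring
  rwa [e1, hs] at h

lemma psd_sum {n : ℕ} {β : Type*} (s : Finset β) (f : β → Matrix (Fin n) (Fin n) ℂ)
    (hf : ∀ i ∈ s, (f i).PosSemidef) : (∑ i ∈ s, f i).PosSemidef :=
  Finset.sum_induction f _ (fun _ _ ha hb => ha.add hb) Matrix.PosSemidef.zero hf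

lemma tau_sub' {n : ℕ} (X Y : Matrix (Fin n) (Fin n) ℂ) : tau (X - Y) = tau X - tau Y := by
  simp [tau, sub_div]

lemma tau_sum' {n : ℕ} {β : Type*} (s : Finset β) (f : β → Matrix (Fin n) (Fin n) ℂ) :
    tau (∑ i ∈ s, f i) = ∑ i ∈ s, tau (f i) := by
  simp [tau, Matrix.trace_sum, Finset.sum_div]

lemma tauNormSq_neg {n : ℕ} (M : Matrix (Fin n) (Fin n) ℂ) : tauNormSq (-M) = tauNormSq M := by
  simp [tauNormSq]

lemma key_ineq {n : ℕ} {P Q : Matrix (Fin n) (Fin n) ℂ} (hP : P.PosSemidef)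
    (hP1 : (1 - P).PosSemidef) (hQ : Q.PosSemidef) (hQ1 : (1 - Q).PosSemidef) :
    tauNormSq (P * Q) ≤ (tau (P * Q)).re := by
  have hsqP : (P - P * P).PosSemidef := psd_sub_sq hP hP1
  have hsqQ : (Q - Q * Q).PosSemidef := psd_sub_sq hQ hQ1
  have hQQ : (Q * Q).PosSemidef := by
    have := hQ.pow 2; rwa [pow_two] at this
  have e2 : ((P * Q)ᴴ * (P * Q)).trace = ((P * P) * (Q * Q)).trace := by
    rw [conjTranspose_mul, hP.isHermitian.eq, hQ.isHermitian.eq,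
      show Q * P * (P * Q) = Q * (P * P * Q) by simp only [mul_assoc],
      Matrix.trace_mul_comm, mul_assoc]
  have ineq1 : ((P * P) * (Q * Q)).trace ≤ (P * (Q * Q)).trace := by
    rw [Matrix.trace_mul_comm, Matrix.trace_mul_comm P]
    exact psd_trace_mul_mono hQQ hsqP
  have ineq2 : (P * (Q * Q)).trace ≤ (P * Q).trace := psd_trace_mul_mono hP hsqQ
  have hle : ((P * Q)ᴴ * (P * Q)).trace ≤ (P * Q).trace := e2 ▸ ineq1.trans ineq2
  have hre := (Complex.le_def.mp hle).1
  unfold tauNormSq tau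
  rw [show ((n : ℕ) : ℂ) = ((n : ℝ) : ℂ) by norm_cast, Complex.div_ofReal_re,
    Complex.div_ofReal_re, div_eq_mul_inv, div_eq_mul_inv]
  exact mul_le_mul_of_nonneg_right hre (by positivity)

lemma per_x {n : ℕ} {α : Type*} [Fintype α] [DecidableEq α]
    (A B : α → Matrix (Fin n) (Fin n) ℂ)
    (hA : IsSubmeasurement A) (hB : IsMeasurement B) :
    (∑ a, tauNormSq (A a - A a * B a)
        ≤ ∑ a, ∑ b, (if a = b then 0 else (tau (A a * B b)).re)) ∧
    (∑ a, tauNormSq (A a * B a - (∑ a', A a') * B a)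
        ≤ ∑ a, ∑ b, (if a = b then 0 else (tau (A a * B b)).re)) := by
  have iteSum : ∀ (f : α → ℝ) (a : α),
      ∑ b, (if a = b then 0 else f b) = (∑ b, f b) - f a := by
    intro f a
    have hcong : ∀ b ∈ Finset.univ, (if a = b then 0 else f b)
        = f b - (if a = b then f b else 0) := by
      intro b _
      split <;> simp_all
    rw [Finset.sum_congr rfl hcong, Finset.sum_sub_distrib, Finset.sum_ite_eq]
    simp
  have hOneSubB : ∀ a, (1 - B a).PosSemidef := by
    intro a
    have h1 : (∑ b ∈ Finset.univ.erase a, B b) + B a = 1 := by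
      rw [Finset.sum_erase_add _ _ (Finset.mem_univ a)]; exact hB.2
    have h2 : 1 - B a = ∑ b ∈ Finset.univ.erase a, B b := by rw [← h1]; abel
    rw [h2]; exact psd_sum _ _ (fun b _ => hB.1 b)
  have hAsub : ∀ a, ((∑ a', A a') - A a).PosSemidef := by
    intro a
    have h1 : (∑ b ∈ Finset.univ.erase a, A b) + A a = ∑ a', A a' :=
      Finset.sum_erase_add _ _ (Finset.mem_univ a)
    have h2 : (∑ a', A a') - A a = ∑ b ∈ Finset.univ.erase a, A b := by rw [← h1]; abel
    rw [h2]; exact psd_sum _ _ (fun b _ => hA.1 b)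
  have hOneSubA : ∀ a, (1 - A a).PosSemidef := by
    intro a
    have h2 : 1 - A a = (1 - ∑ a', A a') + ((∑ a', A a') - A a) := by abel
    rw [h2]; exact hA.2.add (hAsub a)
  have b1 : ∀ a, tauNormSq (A a - A a * B a)
      ≤ (∑ b, (tau (A a * B b)).re) - (tau (A a * B a)).re := by
    intro a
    have e : A a - A a * B a = A a * (1 - B a) := by rw [mul_sub, mul_one]
    have k := key_ineq (hA.1 a) (hOneSubA a) (hOneSubB a)
      (by rw [sub_sub_cancel]; exact hB.1 a)
    rw [e]
    refine k.trans (le_of_eq ?_)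
    have e2 : A a * (1 - B a) = (∑ b, A a * B b) - A a * B a := by
      rw [mul_sub, mul_one, ← Finset.mul_sum, hB.2, mul_one]
    rw [e2, tau_sub', tau_sum', Complex.sub_re, Complex.re_sum]
  have b2 : ∀ a, tauNormSq (A a * B a - (∑ a', A a') * B a)
      ≤ (∑ b, (tau (A b * B a)).re) - (tau (A a * B a)).re := by
    intro a
    have e : A a * B a - (∑ a', A a') * B a = -(((∑ a', A a') - A a) * B a) := by
      rw [sub_mul, neg_sub]
    have hP1 : (1 - ((∑ a', A a') - A a)).PosSemidef := by
      have h2 : 1 - ((∑ a', A a') - A a) = (1 - ∑ a', A a') + A a := by abel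
      rw [h2]; exact hA.2.add (hA.1 a)
    have k := key_ineq (hAsub a) hP1 (hB.1 a) (hOneSubB a)
    rw [e, tauNormSq_neg]
    refine k.trans (le_of_eq ?_)
    have e2 : ((∑ a', A a') - A a) * B a = (∑ b, A b * B a) - A a * B a := by
      rw [sub_mul, Finset.sum_mul]
    rw [e2, tau_sub', tau_sum', Complex.sub_re, Complex.re_sum]
  constructor
  · refine (Finset.sum_le_sum fun a _ => b1 a).trans (le_of_eq ?_)
    exact Finset.sum_congr rfl fun a _ => (iteSum _ a).symm
  · refine (Finset.sum_le_sum fun a _ => b2 a).trans (le_of_eq ?_)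
    calc ∑ a, ((∑ b, (tau (A b * B a)).re) - (tau (A a * B a)).re)
        = (∑ a, ∑ b, (tau (A b * B a)).re) - ∑ a, (tau (A a * B a)).re :=
          Finset.sum_sub_distrib _ _
      _ = (∑ a, ∑ b, (tau (A a * B b)).re) - ∑ a, (tau (A a * B a)).re := by
          rw [Finset.sum_comm]
      _ = ∑ a, ((∑ b, (tau (A a * B b)).re) - (tau (A a * B a)).re) :=
          (Finset.sum_sub_distrib _ _).symm
      _ = ∑ a, ∑ b, (if a = b then 0 else (tau (A a * B b)).re) :=
          Finset.sum_congr rfl fun a _ => (iteSum _ a).symm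

/-- If the submeasurement `A` is `γ`-consistent with the measurement `B`, then
`A^x_a ≈_{√γ} A^x_a B^x_a` and `A^x_a B^x_a ≈_{√γ} A^x B^x_a`, where `A^x = Σ_a A^x_a`. -/
theorem cons_sub_meas {n : ℕ} {X α : Type*}
    [Fintype X] [Fintype α] [DecidableEq α]
    (μ : X → ℝ) (hμ0 : ∀ x, 0 ≤ μ x) (hμ1 : ∑ x, μ x = 1)
    (A B : X → α → Matrix (Fin n) (Fin n) ℂ)
    (hA : ∀ x, IsSubmeasurement (A x)) (hB : ∀ x, IsMeasurement (B x))
    (γ : ℝ)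
    (h : ∑ x, μ x * ∑ a, ∑ b, (if a = b then 0 else (tau (A x a * B x b)).re) ≤ γ) :
    (∑ x, μ x * ∑ a, tauNormSq (A x a - A x a * B x a) ≤ γ) ∧
    (∑ x, μ x * ∑ a, tauNormSq (A x a * B x a - (∑ a', A x a') * B x a) ≤ γ) := by
  constructor
  · refine le_trans (Finset.sum_le_sum fun x _ => ?_) h
    exact mul_le_mul_of_nonneg_left (per_x (A x) (B x) (hA x) (hB x)).1 (hμ0 x)
  · refine le_trans (Finset.sum_le_sum fun x _ => ?_) h
    exact mul_le_mul_of_nonneg_left (per_x (A x) (B x) (hA x) (hB x)).2 (hμ0 x)
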